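/- If a (minimization) permutation problem P satisfies the decomposition property with functions g and h, then for any permutation σ and any i ≤ s < j, the restriction σ(i,j) minimizes g(i,j,L,R,·) over permutations of the set S(i,j) only if, fixing the partition of S(i,j) into S(i,s) and S(s+1,j), the restrictions σ(i,s) and σ(s+1,j) minimize the corresponding left-call and right-call values g(i,s,L, R∪S(s+1,j),·) and g(s+1,j, L∪S(i,s), R,·) respectively (principle of optimality). -/

import Mathlib

lemma icc_split (i s j : ℕ) (his : i ≤ s) (hsj : s < j) :
    Finset.Icc i s ∪ Finset.Icc (s + 1) j = Finset.Icc i j := by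
  ext t; simp only [Finset.mem_union, Finset.mem_Icc]; omega

theorem stmt_17 {α : Type*} [DecidableEq α]
    (g : ℕ → ℕ → Finset α → Finset α → (ℕ → α) → ℝ)
    (h : Finset α → Finset α → Finset α → Finset α → ℝ)
    -- `g i j L R τ` depends only on the sub-permutation `τ(i,j)`
    (hloc : ∀ i j L R (τ τ' : ℕ → α),
        (∀ t, i ≤ t → t ≤ j → τ t = τ' t) → g i j L R τ = g i j L R τ')
    -- the decomposition property
    (hdec : ∀ i s j L R (τ : ℕ → α), i ≤ s → s < j →
        g i j L R τ =
          g i s L (R ∪ (Finset.Icc (s + 1) j).image τ) τ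
          + g (s + 1) j (L ∪ (Finset.Icc i s).image τ) R τ
          + h L R ((Finset.Icc i s).image τ) ((Finset.Icc (s + 1) j).image τ))
    (i s j : ℕ) (L R : Finset α) (σ : ℕ → α) (his : i ≤ s) (hsj : s < j)
    -- `σ(i,j)` minimizes `g(i,j,L,R,·)` over arrangements of the same element set
    (hopt : ∀ τ : ℕ → α, (Finset.Icc i j).image τ = (Finset.Icc i j).image σ →
        g i j L R σ ≤ g i j L R τ) :
    -- left call optimality
    (∀ τ : ℕ → α, (Finset.Icc i s).image τ = (Finset.Icc i s).image σ →
        g i s L (R ∪ (Finset.Icc (s + 1) j).image σ) σ ≤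
          g i s L (R ∪ (Finset.Icc (s + 1) j).image σ) τ) ∧
    -- right call optimality
    (∀ τ : ℕ → α, (Finset.Icc (s + 1) j).image τ = (Finset.Icc (s + 1) j).image σ →
        g (s + 1) j (L ∪ (Finset.Icc i s).image σ) R σ ≤
          g (s + 1) j (L ∪ (Finset.Icc i s).image σ) R τ) := by
  constructor
  · intro τ himg
    set τ' : ℕ → α := fun t => if i ≤ t ∧ t ≤ s then τ t else σ t with hτ'
    have hleft : (Finset.Icc i s).image τ' = (Finset.Icc i s).image τ := by
      apply Finset.image_congr
      intro t ht
      simp only [Finset.mem_Icc, Finset.coe_Icc, Set.mem_Icc] at ht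
      simp [hτ', ht.1, ht.2]
    have hright : (Finset.Icc (s + 1) j).image τ' = (Finset.Icc (s + 1) j).image σ := by
      apply Finset.image_congr
      intro t ht
      simp only [Finset.coe_Icc, Set.mem_Icc] at ht
      have : ¬ (i ≤ t ∧ t ≤ s) := by omega
      simp [hτ', this]
    have hall : (Finset.Icc i j).image τ' = (Finset.Icc i j).image σ := by
      rw [← icc_split i s j his hsj, Finset.image_union, Finset.image_union,
        hleft, hright, himg]
    have key := hopt τ' hall
    rw [hdec i s j L R σ his hsj, hdec i s j L R τ' his hsj, hleft, himg, hright] at key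
    have hrg : g (s + 1) j (L ∪ (Finset.Icc i s).image σ) R τ'
        = g (s + 1) j (L ∪ (Finset.Icc i s).image σ) R σ := by
      apply hloc
      intro t ht1 _
      have : ¬ (i ≤ t ∧ t ≤ s) := by omega
      simp [hτ', this]
    rw [hrg] at key
    have hlg : g i s L (R ∪ (Finset.Icc (s + 1) j).image σ) τ'
        = g i s L (R ∪ (Finset.Icc (s + 1) j).image σ) τ := by
      apply hloc
      intro t ht1 ht2
      simp [hτ', ht1, ht2]
    rw [hlg] at key
    linarith
  · intro τ himg
    set τ' : ℕ → α := fun t => if s + 1 ≤ t ∧ t ≤ j then τ t else σ t with hτ'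
    have hleft : (Finset.Icc i s).image τ' = (Finset.Icc i s).image σ := by
      apply Finset.image_congr
      intro t ht
      simp only [Finset.coe_Icc, Set.mem_Icc] at ht
      have : ¬ (s + 1 ≤ t ∧ t ≤ j) := by omega
      simp [hτ', this]
      intro h1 _; exact absurd h1 (by omega)
    have hright : (Finset.Icc (s + 1) j).image τ' = (Finset.Icc (s + 1) j).image τ := by
      apply Finset.image_congr
      intro t ht
      simp only [Finset.coe_Icc, Set.mem_Icc] at ht
      simp [hτ', ht.1, ht.2]
      intro h1; exact absurd h1 (by omega)
    have hall : (Finset.Icc i j).image τ' = (Finset.Icc i j).image σ := by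
      rw [← icc_split i s j his hsj, Finset.image_union, Finset.image_union,
        hleft, hright, himg]
    have key := hopt τ' hall
    rw [hdec i s j L R σ his hsj, hdec i s j L R τ' his hsj, hleft, hright, himg] at key
    have hlg : g i s L (R ∪ (Finset.Icc (s + 1) j).image σ) τ'
        = g i s L (R ∪ (Finset.Icc (s + 1) j).image σ) σ := by
      apply hloc
      intro t _ ht2
      have : ¬ (s + 1 ≤ t ∧ t ≤ j) := by omega
      simp [hτ', this]
      intro h1 _; exact absurd h1 (by omega)
    rw [hlg] at key
    have hrg : g (s + 1) j (L ∪ (Finset.Icc i s).image σ) R τ'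
        = g (s + 1) j (L ∪ (Finset.Icc i s).image σ) R τ := by
      apply hloc
      intro t ht1 ht2
      simp [hτ', ht1, ht2]
      intro h1; exact absurd h1 (by omega)
    rw [hrg] at key
    linarith
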